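/- In the quotient ring ℤ[ζ₁₂, j] of ℤQ₂₄ (where ζ₁₂ is a primitive 12th root of unity, j² = −1 and jζ₁₂j^{-1} = ζ₁₂^{-1}), the ideal generated by the two elements 1 + ζ₁₂ − j and 1 + ζ₁₂ is the whole ring. -/

import Mathlib

noncomputable section

/-- The element `x` of `ℤQ₂₄` (with `Q₂₄ = QuaternionGroup 6`). -/
def q24x : MonoidAlgebra ℤ (QuaternionGroup 6) :=
  MonoidAlgebra.of ℤ (QuaternionGroup 6) (QuaternionGroup.a 1)

/-- The element `y` of `ℤQ₂₄`. -/
def q24y : MonoidAlgebra ℤ (QuaternionGroup 6) :=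
  MonoidAlgebra.of ℤ (QuaternionGroup 6) (QuaternionGroup.xa 0)

/-- The relation identifying `Φ₁₂(x) = x⁴ − x² + 1` with `0`. -/
def q24rel : MonoidAlgebra ℤ (QuaternionGroup 6) → MonoidAlgebra ℤ (QuaternionGroup 6) → Prop :=
  fun u v => u = q24x ^ 4 - q24x ^ 2 + 1 ∧ v = 0

/-- The ring `ℤ[ζ₁₂, j] = ℤQ₂₄/(Φ₁₂(x))`, with `ζ₁₂` the image of `x` and `j` the image
of `y`. -/
def Z12j : Type := RingQuot q24rel

instance : Ring Z12j := inferInstanceAs (Ring (RingQuot q24rel))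

/-- `ζ₁₂ ∈ ℤ[ζ₁₂, j]`, the image of `x`. -/
def zeta12 : Z12j := RingQuot.mkRingHom q24rel q24x

/-- `j ∈ ℤ[ζ₁₂, j]`, the image of `y`. -/
def jay : Z12j := RingQuot.mkRingHom q24rel q24y

lemma hrel12 : zeta12 ^ 4 - zeta12 ^ 2 + 1 = 0 := by
  have h := RingQuot.mkRingHom_rel (r := q24rel)
    (⟨rfl, rfl⟩ : q24rel (q24x ^ 4 - q24x ^ 2 + 1) 0)
  simp [map_sub, map_add, map_pow] at h
  exact h

lemma zeta12_pow_six : zeta12 ^ 6 = -1 := by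
  have e : zeta12 ^ 6 + 1 = (zeta12 ^ 2 + 1) * (zeta12 ^ 4 - zeta12 ^ 2 + 1) := by
    noncomm_ring
  rw [hrel12, mul_zero] at e
  exact eq_neg_of_add_eq_zero_left e

lemma jay_sq : jay * jay = -1 := by
  have e0 : q24y * q24y = q24x ^ 6 := by
    unfold q24x q24y
    rw [← map_mul, ← map_pow]
    congr 1
  have e : (RingQuot.mkRingHom q24rel) (q24y * q24y)
      = (RingQuot.mkRingHom q24rel) (q24x ^ 6) := by rw [e0]
  have key : jay * jay = zeta12 ^ 6 := by
    unfold jay zeta12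
    exact (map_mul _ _ _).symm.trans (e.trans (map_pow _ _ _))
  rw [key, zeta12_pow_six]

/-- In `ℤ[ζ₁₂, j]`, the (left) ideal generated by `1 + ζ₁₂ − j` and `1 + ζ₁₂` is the
whole ring. -/
theorem stmt_16 :
    Ideal.span ({1 + zeta12 - jay, 1 + zeta12} : Set Z12j) = ⊤ := by
  rw [Ideal.eq_top_iff_one]
  have h1 : (1 + zeta12 - jay) ∈ Ideal.span ({1 + zeta12 - jay, 1 + zeta12} : Set Z12j) :=
    Ideal.subset_span (Set.mem_insert _ _)
  have h2 : (1 + zeta12) ∈ Ideal.span ({1 + zeta12 - jay, 1 + zeta12} : Set Z12j) :=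
    Ideal.subset_span (Set.mem_insert_of_mem _ rfl)
  have hj : jay ∈ Ideal.span ({1 + zeta12 - jay, 1 + zeta12} : Set Z12j) := by
    have := Ideal.sub_mem _ h2 h1
    simpa using this
  have h := Ideal.mul_mem_left _ (-jay) hj
  rw [neg_mul, jay_sq, neg_neg] at h
  exact h

end
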